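/- Let ν be a nonzero real number and k a nonzero complex number. Let be the 3×3 matrix over ℂ[X] given by = [[-ν(X² - k²), 0, -X], [0, -ν(X² - k²), -i·k], [X, i·k, 0]]. Then there exist 3×3 matrices E and F with entries in ℂ[X] such that det(E) = 1, det(F) = 1, and = E·D·F, where D is the diagonal matrix D = diag(1, 1, -ν·(X² - k²)²). -/
import Mathlib


open Polynomial

/-- Smith factorization of the 2D Stokes symbol: `Â = E * D * F` with
`det E = det F = 1` and `D = diag(1, 1, -ν (X² - k²)²)`. -/
theorem smith_factorization_stokes_2d (ν : ℝ) (hν : ν ≠ 0) (k : ℂ) (hk : k ≠ 0) :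
    ∃ E F : Matrix (Fin 3) (Fin 3) (Polynomial ℂ),
      E.det = 1 ∧ F.det = 1 ∧
      (!![-C (ν : ℂ) * (X ^ 2 - C k ^ 2), 0,                               -X;
          0,                               -C (ν : ℂ) * (X ^ 2 - C k ^ 2), -C (Complex.I * k);
          X,                               C (Complex.I * k),              0] :
        Matrix (Fin 3) (Fin 3) (Polynomial ℂ))
        = E * Matrix.diagonal ![1, 1, -C (ν : ℂ) * (X ^ 2 - C k ^ 2) ^ 2] * F := by
  have hD : (Matrix.diagonal ![1, 1, -C (ν : ℂ) * (X ^ 2 - C k ^ 2) ^ 2]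
      : Matrix (Fin 3) (Fin 3) (Polynomial ℂ))
      = !![1, 0, 0; 0, 1, 0; 0, 0, -C (ν : ℂ) * (X ^ 2 - C k ^ 2) ^ 2] := by
    refine Matrix.ext fun i j => ?_
    fin_cases i <;> fin_cases j <;> simp [Matrix.diagonal, Matrix.vecHead, Matrix.vecTail]
  refine ⟨!![C (-Complex.I * ν / k) * (X ^ 2 - C k ^ 2) * X, -X, C (-1 / k ^ 2);
             0, C (-Complex.I * k), 0;
             C (Complex.I * k), 0, 0],
          !![C (-Complex.I / k) * X, 1, 0;
             0, C (-Complex.I * ν / k) * (X ^ 2 - C k ^ 2), 1;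
             1, 0, 0], ?_, ?_, ?_⟩
  · rw [Matrix.det_fin_three]
    apply Polynomial.funext
    intro x
    simp [Matrix.vecHead, Matrix.vecTail]
    try field_simp
    try ring_nf
    try simp [Complex.I_sq]
    try ring
  · rw [Matrix.det_fin_three]
    apply Polynomial.funext
    intro x
    simp [Matrix.vecHead, Matrix.vecTail]
    try field_simp
    try ring_nf
    try simp [Complex.I_sq]
    try ring
  · rw [hD, Matrix.mul_fin_three, Matrix.mul_fin_three]
    refine Matrix.ext fun i j => ?_
    fin_cases i <;> fin_cases j <;>
      (apply Polynomial.funext; intro x;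
       simp [Matrix.vecHead, Matrix.vecTail];
       try field_simp;
       try ring_nf;
       try simp [Complex.I_sq];
       try ring)
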